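/- Let V be a finite-dimensional real vector space, K^e : V → V linear, K^v_α : V → V linear for α = 1,…,M, Δt, η_α > 0. Suppose there exist linear maps N_α, M̂ : V → V with (Id + (Δt/η_α) K^v_α) ∘ N_α = Id for each α and (Id + K^e ∘ Σ_α (Δt/η_α) N_α) ∘ M̂ = Id. Given R₁,…,R_M ∈ V, define ΔE_α := −N_α(R_α) + (Δt/η_α) N_α(M̂(K^e(Σ_β N_β(R_β)))). Then for every γ ∈ {1,…,M}: (Δt/η_γ) K^e(Σ_α ΔE_α) + (Id + (Δt/η_γ) K^v_γ)(ΔE_γ) = −R_γ. -/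
import Mathlib


theorem gkv_newton_system_closed_form_solution
    {V : Type*} [AddCommGroup V] [Module ℝ V] [FiniteDimensional ℝ V]
    (M : ℕ) (Δt : ℝ) (hΔt : 0 < Δt)
    (η : Fin M → ℝ) (hη : ∀ α, 0 < η α)
    (Ke : V →ₗ[ℝ] V) (Kv N : Fin M → (V →ₗ[ℝ] V)) (Mhat : V →ₗ[ℝ] V)
    (hN : ∀ α, (LinearMap.id + (Δt / η α) • Kv α) ∘ₗ N α = LinearMap.id)
    (hM : (LinearMap.id + Ke ∘ₗ (∑ α, (Δt / η α) • N α)) ∘ₗ Mhat = LinearMap.id)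
    (R : Fin M → V)
    (ΔE : Fin M → V)
    (hΔE : ∀ α, ΔE α = -(N α (R α)) +
      (Δt / η α) • N α (Mhat (Ke (∑ β, N β (R β))))) :
    ∀ γ : Fin M,
      (Δt / η γ) • Ke (∑ α, ΔE α) +
        ((ΔE γ) + (Δt / η γ) • Kv γ (ΔE γ)) = -(R γ) := by
  intro γ
  set S : V := ∑ β, N β (R β) with hS
  set u : V := Mhat (Ke S) with hu
  have hN' : ∀ α (v : V), N α v + (Δt / η α) • Kv α (N α v) = v := by
    intro α v
    have := congrArg (fun f : V →ₗ[ℝ] V => f v) (hN α)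
    simpa using this
  -- u + Ke (∑ α, (Δt/η α) • N α u) = Ke S
  have hMu : u + Ke (∑ α, (Δt / η α) • N α u) = Ke S := by
    have := congrArg (fun f : V →ₗ[ℝ] V => f (Ke S)) hM
    simpa [LinearMap.sum_apply, hu] using this
  -- sum of ΔE
  have hsum : ∑ α, ΔE α = -S + ∑ α, (Δt / η α) • N α u := by
    rw [hS, ← Finset.sum_neg_distrib, ← Finset.sum_add_distrib]
    exact Finset.sum_congr rfl fun α _ => hΔE α
  have hKesum : Ke (∑ α, ΔE α) = -u := by
    rw [hsum, map_add, map_neg]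
    have : Ke (∑ α, (Δt / η α) • N α u) = Ke S - u := by
      have := hMu; linear_combination (norm := module) this
    rw [this]; abel
  have hγ : ΔE γ + (Δt / η γ) • Kv γ (ΔE γ) = -R γ + (Δt / η γ) • u := by
    rw [hΔE γ]
    rw [map_add, map_neg, map_smul, smul_add, smul_neg]
    have h1 := hN' γ (R γ)
    have h2 := hN' γ u
    calc -N γ (R γ) + (Δt / η γ) • N γ u +
          (-((Δt / η γ) • Kv γ (N γ (R γ))) + (Δt / η γ) • (Δt / η γ) • Kv γ (N γ u))
        = -(N γ (R γ) + (Δt / η γ) • Kv γ (N γ (R γ)))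
          + (Δt / η γ) • (N γ u + (Δt / η γ) • Kv γ (N γ u)) := by
          rw [smul_add]; module
      _ = -R γ + (Δt / η γ) • u := by rw [h1, h2]
  rw [hKesum, hγ, smul_neg]
  abel
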